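/- Let V be a 4-dimensional oriented real inner product space and W a real inner product space. Write Λ²₊V* and Λ²₋V* for the self-dual and anti-self-dual 2-forms. Suppose F ∈ Λ²₋V* ⊗ W and φ ∈ Λ²₊V* ⊗ W satisfy ⟨r*F, φ⟩ = 0 for every r ∈ gl(V) = End(V), where r*F denotes the induced action of r on the 2-form part of F and ⟨·,·⟩ is the inner product on Λ²V* ⊗ W. Then, viewing F ∈ Hom(Λ²₋V*, W) and φ ∈ Hom(Λ²₊V*, W) via the inner product, the images of F and φ are orthogonal subspaces of W. -/

import Mathlib

open scoped BigOperators

/-- The Levi-Civita symbol on `Fin 4`: the sign of `v` if it is a permutation,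
and `0` otherwise. -/
noncomputable def leviCivita (v : Fin 4 → Fin 4) : ℝ :=
  if h : Function.Bijective v then ((Equiv.Perm.sign (Equiv.ofBijective v h) : ℤ) : ℝ)
  else 0

/-- The Hodge star operator on `W`-valued 2-forms on `ℝ⁴` (with the standard
orthonormal oriented basis), `(*ω)ᵢⱼ = (1/2) ∑ εᵢⱼₖₗ ωₖₗ`. -/
noncomputable def hodgeStar {W : Type*} [AddCommGroup W] [Module ℝ W]
    (ω : Fin 4 → Fin 4 → W) : Fin 4 → Fin 4 → W :=
  fun i j => (2 : ℝ)⁻¹ • ∑ k, ∑ l, leviCivita ![i, j, k, l] • ω k l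

/-- The infinitesimal action of `r ∈ gl(V)` on a `W`-valued 2-form:
`(r*ω)(x, y) = ω(rx, y) + ω(x, ry)`, in coordinates. -/
def glAction {W : Type*} [AddCommGroup W] [Module ℝ W]
    (r : Matrix (Fin 4) (Fin 4) ℝ) (ω : Fin 4 → Fin 4 → W) : Fin 4 → Fin 4 → W :=
  fun i j => (∑ k, r k i • ω k j) + (∑ k, r k j • ω i k)

lemma lc_zero {v : Fin 4 → Fin 4} (h : ¬ Function.Bijective v) : leviCivita v = 0 := dif_neg h
lemma lc_one {v : Fin 4 → Fin 4} (h : Function.Bijective v)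
    (hs : Equiv.Perm.sign (Equiv.ofBijective v h) = 1) : leviCivita v = 1 := by
  rw [leviCivita, dif_pos h, hs]; norm_num
lemma lc_neg {v : Fin 4 → Fin 4} (h : Function.Bijective v)
    (hs : Equiv.Perm.sign (Equiv.ofBijective v h) = -1) : leviCivita v = -1 := by
  rw [leviCivita, dif_pos h, hs]; norm_num

@[simp] lemma lc0100 : leviCivita ![0,1,0,0] = 0 := lc_zero (by decide)
@[simp] lemma lc0101 : leviCivita ![0,1,0,1] = 0 := lc_zero (by decide)
@[simp] lemma lc0102 : leviCivita ![0,1,0,2] = 0 := lc_zero (by decide)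
@[simp] lemma lc0103 : leviCivita ![0,1,0,3] = 0 := lc_zero (by decide)
@[simp] lemma lc0110 : leviCivita ![0,1,1,0] = 0 := lc_zero (by decide)
@[simp] lemma lc0111 : leviCivita ![0,1,1,1] = 0 := lc_zero (by decide)
@[simp] lemma lc0112 : leviCivita ![0,1,1,2] = 0 := lc_zero (by decide)
@[simp] lemma lc0113 : leviCivita ![0,1,1,3] = 0 := lc_zero (by decide)
@[simp] lemma lc0120 : leviCivita ![0,1,2,0] = 0 := lc_zero (by decide)
@[simp] lemma lc0121 : leviCivita ![0,1,2,1] = 0 := lc_zero (by decide)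
@[simp] lemma lc0122 : leviCivita ![0,1,2,2] = 0 := lc_zero (by decide)
@[simp] lemma lc0123 : leviCivita ![0,1,2,3] = 1 := lc_one (by decide) (by decide)
@[simp] lemma lc0130 : leviCivita ![0,1,3,0] = 0 := lc_zero (by decide)
@[simp] lemma lc0131 : leviCivita ![0,1,3,1] = 0 := lc_zero (by decide)
@[simp] lemma lc0132 : leviCivita ![0,1,3,2] = -1 := lc_neg (by decide) (by decide)
@[simp] lemma lc0133 : leviCivita ![0,1,3,3] = 0 := lc_zero (by decide)
@[simp] lemma lc0200 : leviCivita ![0,2,0,0] = 0 := lc_zero (by decide)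
@[simp] lemma lc0201 : leviCivita ![0,2,0,1] = 0 := lc_zero (by decide)
@[simp] lemma lc0202 : leviCivita ![0,2,0,2] = 0 := lc_zero (by decide)
@[simp] lemma lc0203 : leviCivita ![0,2,0,3] = 0 := lc_zero (by decide)
@[simp] lemma lc0210 : leviCivita ![0,2,1,0] = 0 := lc_zero (by decide)
@[simp] lemma lc0211 : leviCivita ![0,2,1,1] = 0 := lc_zero (by decide)
@[simp] lemma lc0212 : leviCivita ![0,2,1,2] = 0 := lc_zero (by decide)
@[simp] lemma lc0213 : leviCivita ![0,2,1,3] = -1 := lc_neg (by decide) (by decide)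
@[simp] lemma lc0220 : leviCivita ![0,2,2,0] = 0 := lc_zero (by decide)
@[simp] lemma lc0221 : leviCivita ![0,2,2,1] = 0 := lc_zero (by decide)
@[simp] lemma lc0222 : leviCivita ![0,2,2,2] = 0 := lc_zero (by decide)
@[simp] lemma lc0223 : leviCivita ![0,2,2,3] = 0 := lc_zero (by decide)
@[simp] lemma lc0230 : leviCivita ![0,2,3,0] = 0 := lc_zero (by decide)
@[simp] lemma lc0231 : leviCivita ![0,2,3,1] = 1 := lc_one (by decide) (by decide)
@[simp] lemma lc0232 : leviCivita ![0,2,3,2] = 0 := lc_zero (by decide)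
@[simp] lemma lc0233 : leviCivita ![0,2,3,3] = 0 := lc_zero (by decide)
@[simp] lemma lc0300 : leviCivita ![0,3,0,0] = 0 := lc_zero (by decide)
@[simp] lemma lc0301 : leviCivita ![0,3,0,1] = 0 := lc_zero (by decide)
@[simp] lemma lc0302 : leviCivita ![0,3,0,2] = 0 := lc_zero (by decide)
@[simp] lemma lc0303 : leviCivita ![0,3,0,3] = 0 := lc_zero (by decide)
@[simp] lemma lc0310 : leviCivita ![0,3,1,0] = 0 := lc_zero (by decide)
@[simp] lemma lc0311 : leviCivita ![0,3,1,1] = 0 := lc_zero (by decide)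
@[simp] lemma lc0312 : leviCivita ![0,3,1,2] = 1 := lc_one (by decide) (by decide)
@[simp] lemma lc0313 : leviCivita ![0,3,1,3] = 0 := lc_zero (by decide)
@[simp] lemma lc0320 : leviCivita ![0,3,2,0] = 0 := lc_zero (by decide)
@[simp] lemma lc0321 : leviCivita ![0,3,2,1] = -1 := lc_neg (by decide) (by decide)
@[simp] lemma lc0322 : leviCivita ![0,3,2,2] = 0 := lc_zero (by decide)
@[simp] lemma lc0323 : leviCivita ![0,3,2,3] = 0 := lc_zero (by decide)
@[simp] lemma lc0330 : leviCivita ![0,3,3,0] = 0 := lc_zero (by decide)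
@[simp] lemma lc0331 : leviCivita ![0,3,3,1] = 0 := lc_zero (by decide)
@[simp] lemma lc0332 : leviCivita ![0,3,3,2] = 0 := lc_zero (by decide)
@[simp] lemma lc0333 : leviCivita ![0,3,3,3] = 0 := lc_zero (by decide)


section HS
variable {W : Type*} [AddCommGroup W] [Module ℝ W]
lemma hs01 (ω : Fin 4 → Fin 4 → W) : hodgeStar ω 0 1 = (2:ℝ)⁻¹ • (ω 2 3 - ω 3 2) := by
  simp [hodgeStar, Fin.sum_univ_four, sub_eq_add_neg, smul_add, smul_neg]; try abel
lemma hs02 (ω : Fin 4 → Fin 4 → W) : hodgeStar ω 0 2 = (2:ℝ)⁻¹ • (ω 3 1 - ω 1 3) := by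
  simp [hodgeStar, Fin.sum_univ_four, sub_eq_add_neg, smul_add, smul_neg]; try abel
lemma hs03 (ω : Fin 4 → Fin 4 → W) : hodgeStar ω 0 3 = (2:ℝ)⁻¹ • (ω 1 2 - ω 2 1) := by
  simp [hodgeStar, Fin.sum_univ_four, sub_eq_add_neg, smul_add, smul_neg]; try abel
end HS

set_option maxHeartbeats 1000000

/-- Freed–Uhlenbeck orthogonality lemma: if an anti-self-dual `W`-valued 2-form `F` and
a self-dual `W`-valued 2-form `φ` on an oriented 4-dimensional inner product space
satisfy `⟨r*F, φ⟩ = 0` for every `r ∈ gl(V)`, then the images of `F` and `φ`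
(viewed as maps `Λ²∓V* → W`) are orthogonal subspaces of `W`. -/
theorem stmt_11 {W : Type*} [NormedAddCommGroup W] [InnerProductSpace ℝ W]
    (F φ : Fin 4 → Fin 4 → W)
    (hFalt : ∀ i j, F i j = -F j i) (hφalt : ∀ i j, φ i j = -φ j i)
    (hFasd : ∀ i j, hodgeStar F i j = -F i j)
    (hφsd : ∀ i j, hodgeStar φ i j = φ i j)
    (horth : ∀ r : Matrix (Fin 4) (Fin 4) ℝ,
      ∑ i, ∑ j, (inner ℝ (glAction r F i j) (φ i j) : ℝ) = 0) :
    ∀ i j k l, (inner ℝ (F i j) (φ k l) : ℝ) = 0 := by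
  -- diagonal entries vanish
  have hFd : ∀ i, F i i = 0 := fun i =>
    by linear_combination (norm := module) (2⁻¹ : ℝ) • (hFalt i i)
  have hφd : ∀ i, φ i i = 0 := fun i =>
    by linear_combination (norm := module) (2⁻¹ : ℝ) • (hφalt i i)
  -- (anti-)self-duality component relations
  have hF23 : F 2 3 = -F 0 1 := by
    have h := hFasd 0 1; rw [hs01, hFalt 3 2] at h
    linear_combination (norm := module) h
  have hF13 : F 1 3 = F 0 2 := by
    have h := hFasd 0 2; rw [hs02, hFalt 3 1] at h
    linear_combination (norm := module) -h
  have hF12 : F 1 2 = -F 0 3 := by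
    have h := hFasd 0 3; rw [hs03, hFalt 2 1] at h
    linear_combination (norm := module) h
  have hφ23 : φ 2 3 = φ 0 1 := by
    have h := hφsd 0 1; rw [hs01, hφalt 3 2] at h
    linear_combination (norm := module) h
  have hφ13 : φ 1 3 = -φ 0 2 := by
    have h := hφsd 0 2; rw [hs02, hφalt 3 1] at h
    linear_combination (norm := module) -h
  have hφ12 : φ 0 3 = φ 1 2 := by
    have h := hφsd 0 3; rw [hs03, hφalt 2 1] at h
    linear_combination (norm := module) -h
  -- canonical forms of all entries
  have hF10 : F 1 0 = -F 0 1 := hFalt 1 0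
  have hF20 : F 2 0 = -F 0 2 := hFalt 2 0
  have hF30 : F 3 0 = -F 0 3 := hFalt 3 0
  have hF21 : F 2 1 = F 0 3 := by rw [hFalt 2 1, hF12, neg_neg]
  have hF31 : F 3 1 = -F 0 2 := by rw [hFalt 3 1, hF13]
  have hF32 : F 3 2 = F 0 1 := by rw [hFalt 3 2, hF23, neg_neg]
  have hφ10 : φ 1 0 = -φ 0 1 := hφalt 1 0
  have hφ20 : φ 2 0 = -φ 0 2 := hφalt 2 0
  have hφ30 : φ 3 0 = -φ 0 3 := hφalt 3 0
  have hφ21 : φ 2 1 = -φ 0 3 := by rw [hφalt 2 1, ← hφ12]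
  have hφ31 : φ 3 1 = φ 0 2 := by rw [hφalt 3 1, hφ13, neg_neg]
  have hφ32 : φ 3 2 = -φ 0 1 := by rw [hφalt 3 2, hφ23]
  have hφ12' : φ 1 2 = φ 0 3 := hφ12.symm
  have hF00 := hFd 0; have hF11 := hFd 1; have hF22 := hFd 2; have hF33 := hFd 3
  have hφ00 := hφd 0; have hφ11 := hφd 1; have hφ22 := hφd 2; have hφ33 := hφd 3
  -- the nine pairings
  have E00 := horth (fun k i => if k = 0 ∧ i = 0 then 1 else 0)
  simp only [glAction, Fin.sum_univ_four, if_true, if_false] at E00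
  simp at E00
  simp only [hF23, hF13, hF12, hF10, hF20, hF30, hF21, hF31, hF32, hF00, hF11, hF22, hF33,
    hφ23, hφ13, hφ12', hφ10, hφ20, hφ30, hφ21, hφ31, hφ32, hφ00, hφ11, hφ22, hφ33,
    inner_add_left, inner_neg_left, inner_neg_right, inner_zero_left, inner_zero_right] at E00
  have E11 := horth (fun k i => if k = 1 ∧ i = 1 then 1 else 0)
  simp only [glAction, Fin.sum_univ_four, if_true, if_false] at E11
  simp at E11
  simp only [hF23, hF13, hF12, hF10, hF20, hF30, hF21, hF31, hF32, hF00, hF11, hF22, hF33,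
    hφ23, hφ13, hφ12', hφ10, hφ20, hφ30, hφ21, hφ31, hφ32, hφ00, hφ11, hφ22, hφ33,
    inner_add_left, inner_neg_left, inner_neg_right, inner_zero_left, inner_zero_right] at E11
  have E22 := horth (fun k i => if k = 2 ∧ i = 2 then 1 else 0)
  simp only [glAction, Fin.sum_univ_four, if_true, if_false] at E22
  simp at E22
  simp only [hF23, hF13, hF12, hF10, hF20, hF30, hF21, hF31, hF32, hF00, hF11, hF22, hF33,
    hφ23, hφ13, hφ12', hφ10, hφ20, hφ30, hφ21, hφ31, hφ32, hφ00, hφ11, hφ22, hφ33,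
    inner_add_left, inner_neg_left, inner_neg_right, inner_zero_left, inner_zero_right] at E22
  have E33 := horth (fun k i => if k = 3 ∧ i = 3 then 1 else 0)
  simp only [glAction, Fin.sum_univ_four, if_true, if_false] at E33
  simp at E33
  simp only [hF23, hF13, hF12, hF10, hF20, hF30, hF21, hF31, hF32, hF00, hF11, hF22, hF33,
    hφ23, hφ13, hφ12', hφ10, hφ20, hφ30, hφ21, hφ31, hφ32, hφ00, hφ11, hφ22, hφ33,
    inner_add_left, inner_neg_left, inner_neg_right, inner_zero_left, inner_zero_right] at E33
  have E01 := horth (fun k i => if k = 0 ∧ i = 1 then 1 else 0)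
  simp only [glAction, Fin.sum_univ_four, if_true, if_false] at E01
  simp at E01
  simp only [hF23, hF13, hF12, hF10, hF20, hF30, hF21, hF31, hF32, hF00, hF11, hF22, hF33,
    hφ23, hφ13, hφ12', hφ10, hφ20, hφ30, hφ21, hφ31, hφ32, hφ00, hφ11, hφ22, hφ33,
    inner_add_left, inner_neg_left, inner_neg_right, inner_zero_left, inner_zero_right] at E01
  have E23 := horth (fun k i => if k = 2 ∧ i = 3 then 1 else 0)
  simp only [glAction, Fin.sum_univ_four, if_true, if_false] at E23
  simp at E23
  simp only [hF23, hF13, hF12, hF10, hF20, hF30, hF21, hF31, hF32, hF00, hF11, hF22, hF33,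
    hφ23, hφ13, hφ12', hφ10, hφ20, hφ30, hφ21, hφ31, hφ32, hφ00, hφ11, hφ22, hφ33,
    inner_add_left, inner_neg_left, inner_neg_right, inner_zero_left, inner_zero_right] at E23
  have E02 := horth (fun k i => if k = 0 ∧ i = 2 then 1 else 0)
  simp only [glAction, Fin.sum_univ_four, if_true, if_false] at E02
  simp at E02
  simp only [hF23, hF13, hF12, hF10, hF20, hF30, hF21, hF31, hF32, hF00, hF11, hF22, hF33,
    hφ23, hφ13, hφ12', hφ10, hφ20, hφ30, hφ21, hφ31, hφ32, hφ00, hφ11, hφ22, hφ33,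
    inner_add_left, inner_neg_left, inner_neg_right, inner_zero_left, inner_zero_right] at E02
  have E13 := horth (fun k i => if k = 1 ∧ i = 3 then 1 else 0)
  simp only [glAction, Fin.sum_univ_four, if_true, if_false] at E13
  simp at E13
  simp only [hF23, hF13, hF12, hF10, hF20, hF30, hF21, hF31, hF32, hF00, hF11, hF22, hF33,
    hφ23, hφ13, hφ12', hφ10, hφ20, hφ30, hφ21, hφ31, hφ32, hφ00, hφ11, hφ22, hφ33,
    inner_add_left, inner_neg_left, inner_neg_right, inner_zero_left, inner_zero_right] at E13
  have E03 := horth (fun k i => if k = 0 ∧ i = 3 then 1 else 0)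
  simp only [glAction, Fin.sum_univ_four, if_true, if_false] at E03
  simp at E03
  simp only [hF23, hF13, hF12, hF10, hF20, hF30, hF21, hF31, hF32, hF00, hF11, hF22, hF33,
    hφ23, hφ13, hφ12', hφ10, hφ20, hφ30, hφ21, hφ31, hφ32, hφ00, hφ11, hφ22, hφ33,
    inner_add_left, inner_neg_left, inner_neg_right, inner_zero_left, inner_zero_right] at E03
  have E12 := horth (fun k i => if k = 1 ∧ i = 2 then 1 else 0)
  simp only [glAction, Fin.sum_univ_four, if_true, if_false] at E12
  simp at E12
  simp only [hF23, hF13, hF12, hF10, hF20, hF30, hF21, hF31, hF32, hF00, hF11, hF22, hF33,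
    hφ23, hφ13, hφ12', hφ10, hφ20, hφ30, hφ21, hφ31, hφ32, hφ00, hφ11, hφ22, hφ33,
    inner_add_left, inner_neg_left, inner_neg_right, inner_zero_left, inner_zero_right] at E12
  -- conclude each pairing vanishes
  have x11 : (inner ℝ (F 0 1) (φ 0 1) : ℝ) = 0 := by linarith
  have x22 : (inner ℝ (F 0 2) (φ 0 2) : ℝ) = 0 := by linarith
  have x33 : (inner ℝ (F 0 3) (φ 0 3) : ℝ) = 0 := by linarith
  have x23 : (inner ℝ (F 0 2) (φ 0 3) : ℝ) = 0 := by linarith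
  have x32 : (inner ℝ (F 0 3) (φ 0 2) : ℝ) = 0 := by linarith
  have x13 : (inner ℝ (F 0 1) (φ 0 3) : ℝ) = 0 := by linarith
  have x31 : (inner ℝ (F 0 3) (φ 0 1) : ℝ) = 0 := by linarith
  have x12 : (inner ℝ (F 0 1) (φ 0 2) : ℝ) = 0 := by linarith
  have x21 : (inner ℝ (F 0 2) (φ 0 1) : ℝ) = 0 := by linarith
  intro i j k l
  fin_cases i <;> fin_cases j <;> fin_cases k <;> fin_cases l <;>
    simp [hF23, hF13, hF12, hF10, hF20, hF30, hF21, hF31, hF32, hF00, hF11, hF22, hF33,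
      hφ23, hφ13, hφ12', hφ10, hφ20, hφ30, hφ21, hφ31, hφ32, hφ00, hφ11, hφ22, hφ33,
      inner_neg_left, inner_neg_right, x11, x22, x33, x23, x32, x13, x31, x12, x21]
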